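/- Let V_j, V_k be nonzero complex numbers, y_s ≠ 0 a complex number, y_m a complex number, z = 1/y_s, α = 1 + z·y_m, I_jk = y_s·(V_j − V_k) + y_m·V_j, S_jk = V_j·conj(I_jk), v_j = |V_j|², v_k = |V_k|², ℓ_jk = |I_jk|². Then |α|²·v_j − v_k = 2·Re(α·conj(z)·S_jk) − |z|²·ℓ_jk. -/

import Mathlib

theorem stmt_4 (Vj Vk ys ym : ℂ) (hVj : Vj ≠ 0) (hVk : Vk ≠ 0) (hys : ys ≠ 0)
    (z : ℂ) (hz : z = 1 / ys)
    (α : ℂ) (hα : α = 1 + z * ym)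
    (Ijk : ℂ) (hI : Ijk = ys * (Vj - Vk) + ym * Vj)
    (Sjk : ℂ) (hSdef : Sjk = Vj * (starRingEnd ℂ) Ijk)
    (vj vk ljk : ℝ)
    (hvj : vj = ‖Vj‖ ^ 2) (hvk : vk = ‖Vk‖ ^ 2)
    (hl : ljk = ‖Ijk‖ ^ 2) :
    ‖α‖ ^ 2 * vj - vk
      = 2 * (α * (starRingEnd ℂ) z * Sjk).re - ‖z‖ ^ 2 * ljk := by
  have hVkey : Vk = α * Vj - z * Ijk := by
    subst hz hα hI
    field_simp
    ring
  subst hvj hvk hl hSdef hVkey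
  simp only [Complex.sq_norm, Complex.normSq_apply, Complex.mul_re, Complex.mul_im,
    Complex.sub_re, Complex.sub_im, Complex.conj_re, Complex.conj_im]
  ring
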